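/- The level-3 theta functions satisfy the duplication formulas: θ₀(0)³·θ₀(2z) = θ₁(z)·(θ₂(z)³ − θ₀(z)³), θ₀(0)³·θ₁(2z) = θ₀(z)·(θ₁(z)³ − θ₂(z)³), and θ₀(0)³·θ₂(2z) = θ₂(z)·(θ₀(z)³ − θ₁(z)³), for all z ∈ ℂ and τ in the upper half plane. -/

import Mathlib

/-- Level-3 theta function `θ_k(z,τ)`. -/
noncomputable def theta3 (k : ℤ) (z τ : ℂ) : ℂ :=
  ∑' n : ℤ, Complex.exp (3 * Real.pi * Complex.I * ((n : ℂ) + (k : ℂ) / 3 - 1 / 6) ^ 2 * τ) *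
    Complex.exp (6 * Real.pi * Complex.I * ((n : ℂ) + (k : ℂ) / 3 - 1 / 6) * (z + 1 / 2))

set_option maxHeartbeats 1600000

namespace Theta3Dup
open Complex Real

noncomputable def g (τ : ℂ) (a : ℝ) (w : ℂ) (n : ℤ) : ℂ :=
  Complex.exp (3 * Real.pi * Complex.I * ((n : ℂ) + (a : ℂ)) ^ 2 * τ) *
    Complex.exp (6 * Real.pi * Complex.I * ((n : ℂ) + (a : ℂ)) * (w + 1 / 2))

lemma norm_g (τ : ℂ) (a : ℝ) (w : ℂ) (n : ℤ) :
    ‖g τ a w n‖ = Real.exp (-3*π*τ.im*((n:ℝ)+a)^2 - 6*π*((n:ℝ)+a)*(w.im)) := by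
  have h1 : (3 * Real.pi * Complex.I * ((n : ℂ) + (a : ℂ)) ^ 2 * τ)
      = ((3*π*((n:ℝ)+a)^2 : ℝ) : ℂ) * (Complex.I*τ) := by push_cast; ring
  have h2 : (6 * Real.pi * Complex.I * ((n : ℂ) + (a : ℂ)) * (w + 1 / 2))
      = ((6*π*((n:ℝ)+a) : ℝ) : ℂ) * (Complex.I*(w+1/2)) := by push_cast; ring
  rw [g, norm_mul, Complex.norm_exp,
    Complex.norm_exp, ← Real.exp_add, h1, h2]
  rw [Complex.re_ofReal_mul, Complex.re_ofReal_mul]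
  simp only [Complex.mul_re, Complex.I_re, Complex.I_im, Complex.add_re, Complex.add_im,
    Complex.ofReal_re, Complex.ofReal_im]
  norm_num
  ring

lemma summable_norm_g {τ : ℂ} (hτ : 0 < τ.im) (a : ℝ) (w : ℂ) :
    Summable fun n : ℤ => ‖g τ a w n‖ := by
  have hb := (summable_pow_mul_jacobiTheta₂_term_bound (3*τ.im*|a| + 3*|w.im|)
    (by linarith : (0:ℝ) < 3*τ.im) 0).mul_left (Real.exp (-3*π*τ.im*a^2 - 6*π*a*w.im))
  refine hb.of_nonneg_of_le (fun n => norm_nonneg _) (fun n => ?_)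
  rw [norm_g, pow_zero, one_mul, ← Real.exp_add]
  apply Real.exp_le_exp.mpr
  have hπ := Real.pi_pos
  have h1 : -(a*(n:ℝ)) ≤ |a| * |(n:ℝ)| := by
    rw [← abs_mul]; exact neg_le_abs _
  have h2 : -(w.im*(n:ℝ)) ≤ |w.im| * |(n:ℝ)| := by
    rw [← abs_mul]; exact neg_le_abs _
  push_cast
  nlinarith [mul_le_mul_of_nonneg_left h1 (le_of_lt (mul_pos (mul_pos (by norm_num : (0:ℝ)<6) hπ) hτ)),
    mul_le_mul_of_nonneg_left h2 (le_of_lt (mul_pos (by norm_num : (0:ℝ)<6) hπ))]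

lemma theta3_eq (k : ℤ) (z τ : ℂ) (a : ℝ) (h : (k:ℂ)/3 - 1/6 = (a:ℂ)) :
    theta3 k z τ = ∑' n : ℤ, g τ a z n := by
  refine tsum_congr fun n => ?_
  rw [g, show (n:ℂ) + (k:ℂ)/3 - 1/6 = (n:ℂ) + (a:ℂ) by rw [← h]; ring]

abbrev J : Type := ℤ × ℤ × ℤ × ℤ

lemma tsum4 {f1 f2 f3 f4 : ℤ → ℂ} (h1 : Summable fun n => ‖f1 n‖)
    (h2 : Summable fun n => ‖f2 n‖) (h3 : Summable fun n => ‖f3 n‖)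
    (h4 : Summable fun n => ‖f4 n‖) :
    (∑' n, f1 n) * ((∑' n, f2 n) * ((∑' n, f3 n) * (∑' n, f4 n))) =
      ∑' p : J, f1 p.1 * (f2 p.2.1 * (f3 p.2.2.1 * f4 p.2.2.2)) := by
  rw [tsum_mul_tsum_of_summable_norm h3 h4,
      tsum_mul_tsum_of_summable_norm h2 (h3.mul_norm h4),
      tsum_mul_tsum_of_summable_norm h1 (h2.mul_norm (h3.mul_norm h4))]

lemma summable4 {f1 f2 f3 f4 : ℤ → ℂ} (h1 : Summable fun n => ‖f1 n‖)
    (h2 : Summable fun n => ‖f2 n‖) (h3 : Summable fun n => ‖f3 n‖)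
    (h4 : Summable fun n => ‖f4 n‖) :
    Summable (fun p : J => f1 p.1 * (f2 p.2.1 * (f3 p.2.2.1 * f4 p.2.2.2))) :=
  (h1.mul_norm (h2.mul_norm (h3.mul_norm h4))).of_norm

def pe (u : J) : J := (u.1, u.2.1, u.2.2.1, u.1 + u.2.1 + u.2.2.1 + 2*u.2.2.2)
def po (u : J) : J := (u.1, u.2.1, u.2.2.1, u.1 + u.2.1 + u.2.2.1 + 2*u.2.2.2 + 1)

def spl : (Σ _ : Bool, J) ≃ J where
  toFun p := if p.1 then po p.2 else pe p.2
  invFun n := ⟨decide ((n.2.2.2 - n.1 - n.2.1 - n.2.2.1) % 2 = 1),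
    (n.1, n.2.1, n.2.2.1, (n.2.2.2 - n.1 - n.2.1 - n.2.2.1)/2)⟩
  left_inv := by
    rintro ⟨b, ⟨x, y, z, w⟩⟩
    cases b <;> simp [pe, po] <;> omega
  right_inv := by
    rintro ⟨x, y, z, w⟩
    by_cases h : (w - x - y - z) % 2 = 1 <;> simp [h, pe, po] <;> omega

lemma tsum_split (F : J → ℂ) (hF : Summable F) :
    ∑' n, F n = (∑' u, F (pe u)) + ∑' u, F (po u) := by
  have hs : Summable fun p : (Σ _ : Bool, J) => F (spl p) := hF.comp_injective spl.injective
  have h1 : ∀ b : Bool, Summable fun u : J => F (spl ⟨b, u⟩) :=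
    fun b => hs.comp_injective sigma_mk_injective
  rw [← spl.tsum_eq F, hs.tsum_sigma' h1, tsum_fintype, Fintype.sum_bool, add_comm]
  congr 1 <;> exact tsum_congr fun u => by simp [spl]

lemma cexp_eq {x y : ℂ} (k : ℤ) (h : x = y + (k:ℂ)*(2*(π:ℂ)*I)) :
    Complex.exp x = Complex.exp y := by
  rw [h, Complex.exp_add, Complex.exp_int_mul_two_pi_mul_I, mul_one]

lemma cexp_eq_neg {x y : ℂ} (k : ℤ) (h : x = y + (k:ℂ)*(2*(π:ℂ)*I) + (π:ℂ)*I) :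
    Complex.exp x = -Complex.exp y := by
  rw [h, Complex.exp_add, Complex.exp_add, Complex.exp_int_mul_two_pi_mul_I, mul_one,
    Complex.exp_pi_mul_I, mul_neg_one]

section Identities
variable (τ z : ℂ)

/-- term of `θ₀(0)³ θ₀(2z)` -/
noncomputable def L1 (p : J) : ℂ :=
  g τ (-1/6) 0 p.1 * (g τ (-1/6) 0 p.2.1 * (g τ (-1/6) 0 p.2.2.1 * g τ (-1/6) (2*z) p.2.2.2))
/-- term of `θ₁(z) θ₂(z)³` -/
noncomputable def A1 (p : J) : ℂ :=
  g τ (1/6) z p.1 * (g τ (1/2) z p.2.1 * (g τ (1/2) z p.2.2.1 * g τ (1/2) z p.2.2.2))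
/-- term of `θ₁(z) θ₀(z)³` -/
noncomputable def B1 (p : J) : ℂ :=
  g τ (1/6) z p.1 * (g τ (-1/6) z p.2.1 * (g τ (-1/6) z p.2.2.1 * g τ (-1/6) z p.2.2.2))

def γ11 : J ≃ J where
  toFun u := (-u.2.2.1-u.2.2.2, -u.2.1-u.2.2.2, u.1+u.2.2.2, u.2.1+u.2.2.1+u.2.2.2)
  invFun y := (y.1+y.2.1+y.2.2.1+y.2.2.2, y.1+y.2.2.2, y.2.1+y.2.2.2, -y.1-y.2.1-y.2.2.2)
  left_inv := by rintro ⟨a,b,c,d⟩; dsimp only; simp only [Prod.mk.injEq, true_and, and_true]; all_goals omega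
  right_inv := by rintro ⟨a,b,c,d⟩; dsimp only; simp only [Prod.mk.injEq, true_and, and_true]; all_goals omega

def γ12 : J ≃ J where
  toFun u := (-u.1-u.2.2.2, u.2.1+u.2.2.2, u.2.2.1+u.2.2.2, u.1)
  invFun y := (y.2.2.2, y.1+y.2.1+y.2.2.2, y.1+y.2.2.1+y.2.2.2, -y.1-y.2.2.2)
  left_inv := by rintro ⟨a,b,c,d⟩; dsimp only; simp only [Prod.mk.injEq, true_and, and_true]; all_goals omega
  right_inv := by rintro ⟨a,b,c,d⟩; dsimp only; simp only [Prod.mk.injEq, true_and, and_true]; all_goals omega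

def γ13 : J ≃ J where
  toFun u := (u.2.1+u.2.2.1+u.2.2.2+1, u.1+u.2.2.1+u.2.2.2+1, u.1+u.2.1+u.2.2.2+1,
    -u.1-u.2.1-u.2.2.1-2*u.2.2.2-2)
  invFun y := (y.2.1+y.2.2.1+y.2.2.2, y.1+y.2.2.1+y.2.2.2, y.1+y.2.1+y.2.2.2,
    -y.1-y.2.1-y.2.2.1-2*y.2.2.2-1)
  left_inv := by rintro ⟨a,b,c,d⟩; dsimp only; simp only [Prod.mk.injEq, true_and, and_true]; all_goals omega
  right_inv := by rintro ⟨a,b,c,d⟩; dsimp only; simp only [Prod.mk.injEq, true_and, and_true]; all_goals omega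

lemma pw11 (u : J) : L1 τ z (po (γ11 u)) = A1 τ z (pe u) := by
  obtain ⟨a,b,c,d⟩ := u
  simp only [L1, A1, g, po, pe, γ11, Equiv.coe_fn_mk, ← Complex.exp_add]
  refine cexp_eq (-3*(b+c+d)-2) ?_
  push_cast
  ring

lemma pw12 (u : J) : L1 τ z (pe (γ12 u)) = -B1 τ z (pe u) := by
  obtain ⟨a,b,c,d⟩ := u
  simp only [L1, B1, g, po, pe, γ12, Equiv.coe_fn_mk, ← Complex.exp_add]
  refine cexp_eq_neg (-3*a-1) ?_
  push_cast
  ring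

lemma pw13 (u : J) : A1 τ z (po u) = B1 τ z (po (γ13 u)) := by
  obtain ⟨a,b,c,d⟩ := u
  simp only [A1, B1, g, po, pe, γ13, Equiv.coe_fn_mk, ← Complex.exp_add]
  refine cexp_eq 0 ?_
  push_cast
  ring

lemma key1 (hτ : 0 < τ.im) :
    theta3 0 0 τ^3 * theta3 0 (2*z) τ + theta3 1 z τ * theta3 0 z τ^3 =
      theta3 1 z τ * theta3 2 z τ^3 := by
  have h0z := summable_norm_g hτ (-1/6) z
  have h00 := summable_norm_g hτ (-1/6) 0
  have h02 := summable_norm_g hτ (-1/6) (2*z)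
  have h1z := summable_norm_g hτ (1/6) z
  have h2z := summable_norm_g hτ (1/2) z
  rw [theta3_eq 0 0 τ (-1/6) (by norm_num), theta3_eq 0 (2*z) τ (-1/6) (by norm_num),
      theta3_eq 1 z τ (1/6) (by norm_num), theta3_eq 0 z τ (-1/6) (by norm_num),
      theta3_eq 2 z τ (1/2) (by norm_num)]
  rw [show ∀ x y : ℂ, x^3*y = x*(x*(x*y)) from fun x y => by ring,
      show ∀ x y : ℂ, x*y^3 = x*(y*(y*y)) from fun x y => by ring,
      show ∀ x y : ℂ, x*y^3 = x*(y*(y*y)) from fun x y => by ring]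
  rw [tsum4 h00 h00 h00 h02, tsum4 h1z h0z h0z h0z, tsum4 h1z h2z h2z h2z]
  have hL : Summable (L1 τ z) := summable4 h00 h00 h00 h02
  have hA : Summable (A1 τ z) := summable4 h1z h2z h2z h2z
  have hB : Summable (B1 τ z) := summable4 h1z h0z h0z h0z
  rw [show (∑' p : J, g τ (-1/6) 0 p.1 * (g τ (-1/6) 0 p.2.1 *
        (g τ (-1/6) 0 p.2.2.1 * g τ (-1/6) (2*z) p.2.2.2))) = ∑' p, L1 τ z p from rfl,
      show (∑' p : J, g τ (1/6) z p.1 * (g τ (-1/6) z p.2.1 *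
        (g τ (-1/6) z p.2.2.1 * g τ (-1/6) z p.2.2.2))) = ∑' p, B1 τ z p from rfl,
      show (∑' p : J, g τ (1/6) z p.1 * (g τ (1/2) z p.2.1 *
        (g τ (1/2) z p.2.2.1 * g τ (1/2) z p.2.2.2))) = ∑' p, A1 τ z p from rfl]
  rw [tsum_split _ hL, tsum_split _ hA, tsum_split _ hB]
  have e1 : (∑' u, L1 τ z (po u)) = ∑' u, A1 τ z (pe u) := by
    rw [← γ11.tsum_eq (fun u => L1 τ z (po u))]
    exact tsum_congr fun u => pw11 τ z u
  have e2 : (∑' u, L1 τ z (pe u)) = -∑' u, B1 τ z (pe u) := by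
    rw [← γ12.tsum_eq (fun u => L1 τ z (pe u)), ← tsum_neg]
    exact tsum_congr fun u => pw12 τ z u
  have e3 : (∑' u, A1 τ z (po u)) = ∑' u, B1 τ z (po u) := by
    rw [← γ13.tsum_eq (fun u => B1 τ z (po u))]
    exact tsum_congr fun u => pw13 τ z u
  rw [e1, e2, e3]
  ring


/-- term of `θ₀(0)³ θ₁(2z)` -/
noncomputable def L2 (p : J) : ℂ :=
  g τ (-1/6) 0 p.1 * (g τ (-1/6) 0 p.2.1 * (g τ (-1/6) 0 p.2.2.1 * g τ (1/6) (2*z) p.2.2.2))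
/-- term of `θ₀(z) θ₁(z)³` -/
noncomputable def A2 (p : J) : ℂ :=
  g τ (-1/6) z p.1 * (g τ (1/6) z p.2.1 * (g τ (1/6) z p.2.2.1 * g τ (1/6) z p.2.2.2))
/-- term of `θ₀(z) θ₂(z)³` -/
noncomputable def B2 (p : J) : ℂ :=
  g τ (-1/6) z p.1 * (g τ (1/2) z p.2.1 * (g τ (1/2) z p.2.2.1 * g τ (1/2) z p.2.2.2))

def γ22 : J ≃ J where
  toFun u := (-u.1-u.2.2.2, u.2.1+u.2.2.2+1, u.2.2.1+u.2.2.2+1, u.1-1)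
  invFun y := (y.2.2.2+1, y.1+y.2.1+y.2.2.2, y.1+y.2.2.1+y.2.2.2, -y.1-y.2.2.2-1)
  left_inv := by rintro ⟨a,b,c,d⟩; dsimp only; simp only [Prod.mk.injEq, true_and, and_true]; all_goals omega
  right_inv := by rintro ⟨a,b,c,d⟩; dsimp only; simp only [Prod.mk.injEq, true_and, and_true]; all_goals omega

def γ23 : J ≃ J where
  toFun u := (u.2.1+u.2.2.1+u.2.2.2+1, u.1+u.2.2.1+u.2.2.2, u.1+u.2.1+u.2.2.2,
    -u.1-u.2.1-u.2.2.1-2*u.2.2.2-1)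
  invFun y := (y.2.1+y.2.2.1+y.2.2.2+1, y.1+y.2.2.1+y.2.2.2, y.1+y.2.1+y.2.2.2,
    -y.1-y.2.1-y.2.2.1-2*y.2.2.2-1)
  left_inv := by rintro ⟨a,b,c,d⟩; dsimp only; simp only [Prod.mk.injEq, true_and, and_true]; all_goals omega
  right_inv := by rintro ⟨a,b,c,d⟩; dsimp only; simp only [Prod.mk.injEq, true_and, and_true]; all_goals omega

lemma pw21 (u : J) : L2 τ z (pe (γ11 u)) = A2 τ z (pe u) := by
  obtain ⟨a,b,c,d⟩ := u
  simp only [L2, A2, g, po, pe, γ11, Equiv.coe_fn_mk, ← Complex.exp_add]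
  refine cexp_eq (-3*(b+c+d)-1) ?_
  push_cast
  ring

lemma pw22 (u : J) : L2 τ z (po (γ22 u)) = -B2 τ z (po u) := by
  obtain ⟨a,b,c,d⟩ := u
  simp only [L2, B2, g, po, pe, γ22, Equiv.coe_fn_mk, ← Complex.exp_add]
  refine cexp_eq_neg (-3*a) ?_
  push_cast
  ring

lemma pw23 (u : J) : A2 τ z (po u) = B2 τ z (pe (γ23 u)) := by
  obtain ⟨a,b,c,d⟩ := u
  simp only [A2, B2, g, po, pe, γ23, Equiv.coe_fn_mk, ← Complex.exp_add]
  refine cexp_eq 0 ?_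
  push_cast
  ring

lemma key2 (hτ : 0 < τ.im) :
    theta3 0 0 τ^3 * theta3 1 (2*z) τ + theta3 0 z τ * theta3 2 z τ^3 =
      theta3 0 z τ * theta3 1 z τ^3 := by
  have h0z := summable_norm_g hτ (-1/6) z
  have h00 := summable_norm_g hτ (-1/6) 0
  have h12 := summable_norm_g hτ (1/6) (2*z)
  have h1z := summable_norm_g hτ (1/6) z
  have h2z := summable_norm_g hτ (1/2) z
  rw [theta3_eq 0 0 τ (-1/6) (by norm_num), theta3_eq 1 (2*z) τ (1/6) (by norm_num),
      theta3_eq 0 z τ (-1/6) (by norm_num), theta3_eq 2 z τ (1/2) (by norm_num),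
      theta3_eq 1 z τ (1/6) (by norm_num)]
  rw [show ∀ x y : ℂ, x^3*y = x*(x*(x*y)) from fun x y => by ring,
      show ∀ x y : ℂ, x*y^3 = x*(y*(y*y)) from fun x y => by ring,
      show ∀ x y : ℂ, x*y^3 = x*(y*(y*y)) from fun x y => by ring]
  rw [tsum4 h00 h00 h00 h12, tsum4 h0z h2z h2z h2z, tsum4 h0z h1z h1z h1z]
  have hL : Summable (L2 τ z) := summable4 h00 h00 h00 h12
  have hA : Summable (A2 τ z) := summable4 h0z h1z h1z h1z
  have hB : Summable (B2 τ z) := summable4 h0z h2z h2z h2z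
  rw [show (∑' p : J, g τ (-1/6) 0 p.1 * (g τ (-1/6) 0 p.2.1 *
        (g τ (-1/6) 0 p.2.2.1 * g τ (1/6) (2*z) p.2.2.2))) = ∑' p, L2 τ z p from rfl,
      show (∑' p : J, g τ (-1/6) z p.1 * (g τ (1/2) z p.2.1 *
        (g τ (1/2) z p.2.2.1 * g τ (1/2) z p.2.2.2))) = ∑' p, B2 τ z p from rfl,
      show (∑' p : J, g τ (-1/6) z p.1 * (g τ (1/6) z p.2.1 *
        (g τ (1/6) z p.2.2.1 * g τ (1/6) z p.2.2.2))) = ∑' p, A2 τ z p from rfl]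
  rw [tsum_split _ hL, tsum_split _ hA, tsum_split _ hB]
  have e1 : (∑' u, L2 τ z (pe u)) = ∑' u, A2 τ z (pe u) := by
    rw [← γ11.tsum_eq (fun u => L2 τ z (pe u))]
    exact tsum_congr fun u => pw21 τ z u
  have e2 : (∑' u, L2 τ z (po u)) = -∑' u, B2 τ z (po u) := by
    rw [← γ22.tsum_eq (fun u => L2 τ z (po u)), ← tsum_neg]
    exact tsum_congr fun u => pw22 τ z u
  have e3 : (∑' u, A2 τ z (po u)) = ∑' u, B2 τ z (pe u) := by
    rw [← γ23.tsum_eq (fun u => B2 τ z (pe u))]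
    exact tsum_congr fun u => pw23 τ z u
  rw [e1, e2, e3]
  ring

/-- term of `θ₀(0)³ θ₂(2z)` -/
noncomputable def L3 (p : J) : ℂ :=
  g τ (-1/6) 0 p.1 * (g τ (-1/6) 0 p.2.1 * (g τ (-1/6) 0 p.2.2.1 * g τ (1/2) (2*z) p.2.2.2))
/-- term of `θ₂(z) θ₀(z)³` -/
noncomputable def A3 (p : J) : ℂ :=
  g τ (1/2) z p.1 * (g τ (-1/6) z p.2.1 * (g τ (-1/6) z p.2.2.1 * g τ (-1/6) z p.2.2.2))
/-- term of `θ₂(z) θ₁(z)³` -/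
noncomputable def B3 (p : J) : ℂ :=
  g τ (1/2) z p.1 * (g τ (1/6) z p.2.1 * (g τ (1/6) z p.2.2.1 * g τ (1/6) z p.2.2.2))

def γ31 : J ≃ J where
  toFun u := (-u.2.2.1-u.2.2.2, -u.2.1-u.2.2.2, u.1+u.2.2.2+1, u.2.1+u.2.2.1+u.2.2.2-1)
  invFun y := (y.1+y.2.1+y.2.2.1+y.2.2.2, y.1+y.2.2.2+1, y.2.1+y.2.2.2+1, -y.1-y.2.1-y.2.2.2-1)
  left_inv := by rintro ⟨a,b,c,d⟩; dsimp only; simp only [Prod.mk.injEq, true_and, and_true]; all_goals omega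
  right_inv := by rintro ⟨a,b,c,d⟩; dsimp only; simp only [Prod.mk.injEq, true_and, and_true]; all_goals omega

def γ33 : J ≃ J where
  toFun u := (u.2.1+u.2.2.1+u.2.2.2-1, u.1+u.2.2.1+u.2.2.2, u.1+u.2.1+u.2.2.2,
    -u.1-u.2.1-u.2.2.1-2*u.2.2.2)
  invFun y := (y.2.1+y.2.2.1+y.2.2.2, y.1+y.2.2.1+y.2.2.2+1, y.1+y.2.1+y.2.2.2+1,
    -y.1-y.2.1-y.2.2.1-2*y.2.2.2-1)
  left_inv := by rintro ⟨a,b,c,d⟩; dsimp only; simp only [Prod.mk.injEq, true_and, and_true]; all_goals omega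
  right_inv := by rintro ⟨a,b,c,d⟩; dsimp only; simp only [Prod.mk.injEq, true_and, and_true]; all_goals omega

lemma pw31 (u : J) : L3 τ z (po (γ31 u)) = A3 τ z (po u) := by
  obtain ⟨a,b,c,d⟩ := u
  simp only [L3, A3, g, po, pe, γ31, Equiv.coe_fn_mk, ← Complex.exp_add]
  refine cexp_eq (-3*(b+c+d)) ?_
  push_cast
  ring

lemma pw32 (u : J) : L3 τ z (pe (γ12 u)) = -B3 τ z (pe u) := by
  obtain ⟨a,b,c,d⟩ := u
  simp only [L3, B3, g, po, pe, γ12, Equiv.coe_fn_mk, ← Complex.exp_add]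
  refine cexp_eq_neg (-3*a-2) ?_
  push_cast
  ring

lemma pw33 (u : J) : A3 τ z (pe u) = B3 τ z (po (γ33 u)) := by
  obtain ⟨a,b,c,d⟩ := u
  simp only [A3, B3, g, po, pe, γ33, Equiv.coe_fn_mk, ← Complex.exp_add]
  refine cexp_eq 0 ?_
  push_cast
  ring

lemma key3 (hτ : 0 < τ.im) :
    theta3 0 0 τ^3 * theta3 2 (2*z) τ + theta3 2 z τ * theta3 1 z τ^3 =
      theta3 2 z τ * theta3 0 z τ^3 := by
  have h0z := summable_norm_g hτ (-1/6) z
  have h00 := summable_norm_g hτ (-1/6) 0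
  have h22 := summable_norm_g hτ (1/2) (2*z)
  have h1z := summable_norm_g hτ (1/6) z
  have h2z := summable_norm_g hτ (1/2) z
  rw [theta3_eq 0 0 τ (-1/6) (by norm_num), theta3_eq 2 (2*z) τ (1/2) (by norm_num),
      theta3_eq 2 z τ (1/2) (by norm_num), theta3_eq 1 z τ (1/6) (by norm_num),
      theta3_eq 0 z τ (-1/6) (by norm_num)]
  rw [show ∀ x y : ℂ, x^3*y = x*(x*(x*y)) from fun x y => by ring,
      show ∀ x y : ℂ, x*y^3 = x*(y*(y*y)) from fun x y => by ring,
      show ∀ x y : ℂ, x*y^3 = x*(y*(y*y)) from fun x y => by ring]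
  rw [tsum4 h00 h00 h00 h22, tsum4 h2z h1z h1z h1z, tsum4 h2z h0z h0z h0z]
  have hL : Summable (L3 τ z) := summable4 h00 h00 h00 h22
  have hA : Summable (A3 τ z) := summable4 h2z h0z h0z h0z
  have hB : Summable (B3 τ z) := summable4 h2z h1z h1z h1z
  rw [show (∑' p : J, g τ (-1/6) 0 p.1 * (g τ (-1/6) 0 p.2.1 *
        (g τ (-1/6) 0 p.2.2.1 * g τ (1/2) (2*z) p.2.2.2))) = ∑' p, L3 τ z p from rfl,
      show (∑' p : J, g τ (1/2) z p.1 * (g τ (1/6) z p.2.1 *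
        (g τ (1/6) z p.2.2.1 * g τ (1/6) z p.2.2.2))) = ∑' p, B3 τ z p from rfl,
      show (∑' p : J, g τ (1/2) z p.1 * (g τ (-1/6) z p.2.1 *
        (g τ (-1/6) z p.2.2.1 * g τ (-1/6) z p.2.2.2))) = ∑' p, A3 τ z p from rfl]
  rw [tsum_split _ hL, tsum_split _ hA, tsum_split _ hB]
  have e1 : (∑' u, L3 τ z (po u)) = ∑' u, A3 τ z (po u) := by
    rw [← γ31.tsum_eq (fun u => L3 τ z (po u))]
    exact tsum_congr fun u => pw31 τ z u
  have e2 : (∑' u, L3 τ z (pe u)) = -∑' u, B3 τ z (pe u) := by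
    rw [← γ12.tsum_eq (fun u => L3 τ z (pe u)), ← tsum_neg]
    exact tsum_congr fun u => pw32 τ z u
  have e3 : (∑' u, A3 τ z (pe u)) = ∑' u, B3 τ z (po u) := by
    rw [← γ33.tsum_eq (fun u => B3 τ z (po u))]
    exact tsum_congr fun u => pw33 τ z u
  rw [e1, e2, e3]
  ring

end Identities
end Theta3Dup

theorem theta3_duplication_formulas (τ : ℂ) (hτ : 0 < τ.im) (z : ℂ) :
    theta3 0 0 τ ^ 3 * theta3 0 (2 * z) τ =
      theta3 1 z τ * (theta3 2 z τ ^ 3 - theta3 0 z τ ^ 3) ∧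
    theta3 0 0 τ ^ 3 * theta3 1 (2 * z) τ =
      theta3 0 z τ * (theta3 1 z τ ^ 3 - theta3 2 z τ ^ 3) ∧
    theta3 0 0 τ ^ 3 * theta3 2 (2 * z) τ =
      theta3 2 z τ * (theta3 0 z τ ^ 3 - theta3 1 z τ ^ 3) := by
  refine ⟨?_, ?_, ?_⟩
  · linear_combination Theta3Dup.key1 τ z hτ
  · linear_combination Theta3Dup.key2 τ z hτ
  · linear_combination Theta3Dup.key3 τ z hτ
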